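/- For any ε > 0 and θ > e^ε, there is no randomized approval-based committee rule satisfying both ε-DP and θ-justified representation, assuming m ≥ k+1 and n ≥ 2⌈n/k⌉ - 1 (i.e., the witnessing profiles are well-defined). -/
import Mathlib


open scoped Classical

noncomputable section

/-- A profile assigns to each of the `n` voters an approval ballot (a finite set of alternatives). -/
abbrev Profile (A : Type) (n : ℕ) := Fin n → Finset A

/-- Two profiles are neighboring if they differ in at most one voter's ballot. -/
def Neighboring {A : Type} {n : ℕ} (P P' : Profile A n) : Prop :=
  ∃ i : Fin n, ∀ j : Fin n, j ≠ i → P j = P' j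

/-- `W'` Pareto-dominates `W` in profile `P`. -/
def ParetoDom {A : Type} [DecidableEq A] {n : ℕ} (P : Profile A n) (W' W : Finset A) : Prop :=
  (∀ i, (W ∩ P i).card ≤ (W' ∩ P i).card) ∧ (∃ i, (W ∩ P i).card < (W' ∩ P i).card)

/-- The set of alternatives approved by every voter in `V`. -/
def commonApproved {A : Type} [Fintype A] {n : ℕ} (P : Profile A n) (V : Finset (Fin n)) :
    Finset A :=
  Finset.univ.filter (fun a => ∀ i ∈ V, a ∈ P i)

/-- `V` is an `ℓ`-cohesive group for `(P, k)`: `|V| ≥ ℓ·n/k` and `|⋂_{i∈V} P i| ≥ ℓ`. -/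
def Cohesive {A : Type} [Fintype A] {n : ℕ} (P : Profile A n) (k ℓ : ℕ)
    (V : Finset (Fin n)) : Prop :=
  ℓ * n ≤ V.card * k ∧ ℓ ≤ (commonApproved P V).card

/-- Committee `W` (of size `k`) satisfies justified representation for `(P, k)`. -/
def JRsat {A : Type} [Fintype A] [DecidableEq A] {n : ℕ} (P : Profile A n) (k : ℕ)
    (W : Finset A) : Prop :=
  W.card = k ∧ ∀ V : Finset (Fin n), Cohesive P k 1 V → ∃ i ∈ V, (P i ∩ W).Nonempty

/-- Committee `W` satisfies proportional justified representation for `(P, k)`. -/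
def PJRsat {A : Type} [Fintype A] [DecidableEq A] {n : ℕ} (P : Profile A n) (k : ℕ)
    (W : Finset A) : Prop :=
  W.card = k ∧ ∀ (ℓ : ℕ) (V : Finset (Fin n)), 1 ≤ ℓ → Cohesive P k ℓ V →
    ℓ ≤ (W ∩ V.biUnion P).card

/-- Committee `W` satisfies extended justified representation for `(P, k)`. -/
def EJRsat {A : Type} [Fintype A] [DecidableEq A] {n : ℕ} (P : Profile A n) (k : ℕ)
    (W : Finset A) : Prop :=
  W.card = k ∧ ∀ (ℓ : ℕ) (V : Finset (Fin n)), 1 ≤ ℓ → Cohesive P k ℓ V →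
    ∃ i ∈ V, ℓ ≤ (P i ∩ W).card

/-- `W` is a Condorcet committee for `(P, k)`: against every other size-`k` committee,
strictly more than half of the voters prefer `W`. -/
def CondorcetCommittee {A : Type} [Fintype A] [DecidableEq A] {n : ℕ} (P : Profile A n)
    (k : ℕ) (W : Finset A) : Prop :=
  W.card = k ∧ ∀ W' : Finset A, W'.card = k → W' ≠ W →
    n < 2 * (Finset.univ.filter
      (fun i : Fin n => (P i ∩ W').card < (P i ∩ W).card)).card

/-- A randomized approval-based committee (ABC) rule: for each profile and committee size `k`,
a probability distribution over the size-`k` committees. -/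
structure ABCRule (A : Type) [Fintype A] [DecidableEq A] (n : ℕ) where
  prob : Profile A n → ℕ → Finset A → ℝ
  nonneg : ∀ P k W, 0 ≤ prob P k W
  size_eq : ∀ P k W, prob P k W ≠ 0 → W.card = k
  sum_one : ∀ P k, k ≤ Fintype.card A →
    ∑ W ∈ Finset.univ.filter (fun W : Finset A => W.card = k), prob P k W = 1

variable {A : Type} [Fintype A] [DecidableEq A] {n : ℕ}

/-- ε-differential privacy at committee size `k`. -/
def DPAt (f : ABCRule A n) (k : ℕ) (ε : ℝ) : Prop :=
  ∀ (P P' : Profile A n) (W : Finset A),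
    Neighboring P P' → f.prob P k W ≤ Real.exp ε * f.prob P' k W

/-- ε-differential privacy: single-ballot changes alter each committee's winning
probability by a factor of at most `e^ε`. -/
def DP (f : ABCRule A n) (ε : ℝ) : Prop := ∀ k : ℕ, DPAt f k ε

/-- Neutrality: the rule commutes with permutations of the alternatives. -/
def Neutral (f : ABCRule A n) : Prop :=
  ∀ (σ : Equiv.Perm A) (P : Profile A n) (k : ℕ) (W : Finset A),
    f.prob (fun i => (P i).image σ) k (W.image σ) = f.prob P k W

/-- θ-JR: each JR committee wins with probability at least θ times that of each non-JR one. -/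
def ThetaJR (f : ABCRule A n) (θ : ℝ) : Prop :=
  ∀ (P : Profile A n) (k : ℕ) (W₁ W₂ : Finset A),
    JRsat P k W₁ → W₂.card = k → ¬ JRsat P k W₂ →
      θ * f.prob P k W₂ ≤ f.prob P k W₁

/-- ρ-PJR. -/
def RhoPJR (f : ABCRule A n) (ρ : ℝ) : Prop :=
  ∀ (P : Profile A n) (k : ℕ) (W₁ W₂ : Finset A),
    PJRsat P k W₁ → W₂.card = k → ¬ PJRsat P k W₂ →
      ρ * f.prob P k W₂ ≤ f.prob P k W₁

/-- κ-EJR. -/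
def KappaEJR (f : ABCRule A n) (κ : ℝ) : Prop :=
  ∀ (P : Profile A n) (k : ℕ) (W₁ W₂ : Finset A),
    EJRsat P k W₁ → W₂.card = k → ¬ EJRsat P k W₂ →
      κ * f.prob P k W₂ ≤ f.prob P k W₁

/-- Exact Condorcet criterion: whenever a Condorcet committee exists, it wins with
probability one. -/
def CondorcetCrit (f : ABCRule A n) : Prop :=
  ∀ (P : Profile A n) (k : ℕ) (W : Finset A),
    CondorcetCommittee P k W → f.prob P k W = 1

/-- η-Condorcet criterion. -/
def EtaCC (f : ABCRule A n) (η : ℝ) : Prop :=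
  ∀ (P : Profile A n) (k : ℕ) (Wc W : Finset A),
    CondorcetCommittee P k Wc → W.card = k → W ≠ Wc →
      η * f.prob P k W ≤ f.prob P k Wc

/-- Exact Pareto efficiency at committee size `k`: no committee in the support is
Pareto-dominated by another size-`k` committee. -/
def ParetoEffAt (f : ABCRule A n) (k : ℕ) : Prop :=
  ∀ (P : Profile A n) (W : Finset A), f.prob P k W ≠ 0 →
    ∀ W' : Finset A, W'.card = k → ¬ ParetoDom P W' W

/-- β-Pareto efficiency at committee size `k`. -/
def BetaPEAt (f : ABCRule A n) (k : ℕ) (β : ℝ) : Prop :=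
  ∀ (P : Profile A n) (W₁ W₂ : Finset A), W₁.card = k → W₂.card = k →
    ParetoDom P W₁ W₂ → β * f.prob P k W₂ ≤ f.prob P k W₁

/-- The approval voting score of a committee. -/
def AV (P : Profile A n) (W : Finset A) : ℕ := ∑ j, (P j ∩ W).card

/-- The set of size-`k` committees satisfying JR for `(P, k)`. -/
def JRset (P : Profile A n) (k : ℕ) : Finset (Finset A) :=
  Finset.univ.filter (fun W => JRsat P k W)

/-- Auxiliary: cardinality of the set of `Fin n` with value in `[a, b)`. -/
lemma card_filter_val_Ico {n : ℕ} (a b : ℕ) (hb : b ≤ n) :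
    (Finset.univ.filter (fun i : Fin n => a ≤ i.val ∧ i.val < b)).card = b - a := by
  have himg : (Finset.univ.filter (fun i : Fin n => a ≤ i.val ∧ i.val < b)).image Fin.val
      = Finset.Ico a b := by
    ext j
    simp only [Finset.mem_image, Finset.mem_filter, Finset.mem_univ, true_and, Finset.mem_Ico]
    constructor
    · rintro ⟨i, ⟨h1, h2⟩, rfl⟩; exact ⟨h1, h2⟩
    · rintro ⟨h1, h2⟩; exact ⟨⟨j, lt_of_lt_of_le h2 hb⟩, ⟨h1, h2⟩, rfl⟩
  have hinj := Finset.card_image_of_injective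
    (Finset.univ.filter (fun i : Fin n => a ≤ i.val ∧ i.val < b)) (Fin.val_injective)
  rw [himg] at hinj
  rw [← hinj, Nat.card_Ico]

/-- Auxiliary: under DP, zero probability propagates between any two profiles. -/
lemma prob_zero_chain {A : Type} [Fintype A] [DecidableEq A] {n : ℕ}
    (f : ABCRule A n) {ε : ℝ} (hDP : DP f ε) (k : ℕ) (W : Finset A) :
    ∀ (d : ℕ) (P Q : Profile A n),
      (Finset.univ.filter (fun i => P i ≠ Q i)).card ≤ d →
      f.prob Q k W = 0 → f.prob P k W = 0 := by
  intro d
  induction d with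
  | zero =>
    intro P Q hcard hQ
    have hPQ : P = Q := by
      funext i
      by_contra hne
      have hmem : i ∈ Finset.univ.filter (fun i => P i ≠ Q i) := by
        simp [hne]
      have := Finset.card_pos.mpr ⟨i, hmem⟩
      omega
    rw [hPQ]; exact hQ
  | succ d ih =>
    intro P Q hcard hQ
    by_cases hPQ : ∀ i, P i = Q i
    · have : P = Q := funext hPQ
      rw [this]; exact hQ
    · push_neg at hPQ
      obtain ⟨i, hi⟩ := hPQ
      have hnb : Neighboring P (Function.update P i (Q i)) :=
        ⟨i, fun j hj => (Function.update_of_ne hj _ _).symm⟩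
      have hsub : Finset.univ.filter (fun j => Function.update P i (Q i) j ≠ Q j)
          ⊆ (Finset.univ.filter (fun j => P j ≠ Q j)).erase i := by
        intro j hj
        simp only [Finset.mem_filter, Finset.mem_univ, true_and] at hj
        rcases eq_or_ne j i with rfl | hji
        · exact absurd (Function.update_self j (Q j) P) hj
        · refine Finset.mem_erase.mpr ⟨hji, ?_⟩
          simp only [Finset.mem_filter, Finset.mem_univ, true_and]
          rwa [Function.update_of_ne hji] at hj
      have hP₂0 : f.prob (Function.update P i (Q i)) k W = 0 := by
        apply ih _ Q _ hQ
        have hiin : i ∈ Finset.univ.filter (fun j => P j ≠ Q j) := by simp [hi]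
        have h1 := Finset.card_le_card hsub
        have h2 := Finset.card_erase_of_mem hiin
        omega
      have hle := hDP k P (Function.update P i (Q i)) W hnb
      rw [hP₂0, mul_zero] at hle
      exact le_antisymm hle (f.nonneg P k W)

/-- For ε > 0 and θ > e^ε, no ABC rule satisfies both ε-DP and θ-JR
(assuming m ≥ k+1, m ≥ 3, and n ≥ 2⌈n/k⌉ − 1 so the witness profiles exist). -/
theorem dp_thetaJR_upper (hA : 3 ≤ Fintype.card A) (f : ABCRule A n) (ε θ : ℝ)
    (hε : 0 < ε) (hθ : Real.exp ε < θ)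
    (k : ℕ) (hk : 0 < k) (hm : k + 1 ≤ Fintype.card A) (hn0 : 0 < n)
    (hn : 2 * ((n + k - 1) / k) - 1 ≤ n) :
    ¬ (DP f ε ∧ ThetaJR f θ) := by
  rintro ⟨hDP, hJR⟩
  obtain ⟨q, hqdef⟩ : ∃ q : ℕ, (n + k - 1) / k = q := ⟨_, rfl⟩
  rw [hqdef] at hn
  -- Basic arithmetic about q = ⌈n/k⌉
  have hq' : q = (n - 1) / k + 1 := by
    rw [← hqdef, show n + k - 1 = (n - 1) + k from by omega, Nat.add_div_right _ hk]
  have hqk : n ≤ q * k := by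
    rw [hq', Nat.succ_mul]
    have h1 := Nat.div_add_mod (n - 1) k
    rw [mul_comm] at h1
    have h2 := Nat.mod_lt (n - 1) hk
    obtain ⟨X, hX⟩ : ∃ X, (n - 1) / k * k = X := ⟨_, rfl⟩
    obtain ⟨R, hR⟩ : ∃ R, (n - 1) % k = R := ⟨_, rfl⟩
    rw [hX, hR] at h1; rw [hR] at h2; rw [hX]
    omega
  have hq2 : (q - 1) * k < n := by
    rw [hq', Nat.add_sub_cancel]
    have := Nat.div_mul_le_self (n - 1) k
    omega
  have hq1 : 1 ≤ q := by rw [hq']; exact Nat.succ_le_succ (Nat.zero_le _)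
  have hqn : q ≤ n := by omega
  have h2qn : 2 * q - 1 ≤ n := hn
  -- Key claim: every size-k committee gets probability 0 on the all-empty profile
  have key : ∀ W : Finset A, W.card = k →
      f.prob (fun _ : Fin n => (∅ : Finset A)) k W = 0 := by
    intro W hW
    -- choose c ∉ W and d ∈ W
    have hWlt : W.card < Fintype.card A := by omega
    obtain ⟨c, hc⟩ : ∃ c, c ∉ W := by
      by_contra hall
      push_neg at hall
      have : W = Finset.univ := Finset.eq_univ_of_forall hall
      rw [this, Finset.card_univ] at hWlt
      omega
    obtain ⟨d, hd⟩ : ∃ d, d ∈ W := Finset.card_pos.mp (by omega)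
    have hcd : c ≠ d := fun h => hc (h ▸ hd)
    -- the two neighboring profiles
    set Q : Profile A n := fun i =>
      if i.val < q then {c} else if i.val < 2 * q - 1 then {d} else ∅ with hQdef
    set Q' : Profile A n := fun i =>
      if i.val < q - 1 then {c} else if i.val < 2 * q - 1 then {d} else ∅ with hQ'def
    -- the companion committee
    set W₁ : Finset A := insert c (W.erase d) with hW₁def
    have hcW₁ : c ∈ W₁ := Finset.mem_insert_self _ _
    have hdW₁ : d ∉ W₁ := by
      simp only [hW₁def, Finset.mem_insert, Finset.mem_erase]
      push_neg
      exact ⟨fun h => hcd h.symm, fun h => absurd rfl h⟩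
    have hW₁card : W₁.card = k := by
      rw [hW₁def, Finset.card_insert_of_notMem (by
        simp only [Finset.mem_erase]; exact fun h => hc h.2),
        Finset.card_erase_of_mem hd, hW]
      omega
    -- Q and Q' are neighboring (they differ only at voter q-1)
    have hqlt : q - 1 < n := by omega
    have hnb : Neighboring Q Q' := by
      refine ⟨⟨q - 1, hqlt⟩, fun j hj => ?_⟩
      have hjv : j.val ≠ q - 1 := fun h => hj (Fin.ext h)
      simp only [hQdef, hQ'def]
      split_ifs <;> first | rfl | omega
    have hnb' : Neighboring Q' Q := by
      obtain ⟨i, hi⟩ := hnb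
      exact ⟨i, fun j hj => (hi j hj).symm⟩
    -- characterization of cohesive groups in Q: all ballots are {c}
    have hQchar : ∀ V : Finset (Fin n), Cohesive Q k 1 V →
        V.Nonempty ∧ ∀ i ∈ V, Q i = {c} := by
      rintro V ⟨hV1, hV2⟩
      rw [one_mul] at hV1
      have hVne : V.Nonempty := by
        rcases Finset.eq_empty_or_nonempty V with rfl | h
        · simp at hV1; omega
        · exact h
      obtain ⟨a, haa⟩ := Finset.card_pos.mp (by omega : 0 < (commonApproved Q V).card)
      simp only [commonApproved, Finset.mem_filter, Finset.mem_univ, true_and] at haa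
      by_cases hall : ∀ i ∈ V, i.val < q
      · refine ⟨hVne, fun i hi => ?_⟩
        simp only [hQdef]
        rw [if_pos (hall i hi)]
      · exfalso
        push_neg at hall
        obtain ⟨i₀, hi₀V, hi₀⟩ := hall
        have had : a = d := by
          have := haa i₀ hi₀V
          simp only [hQdef, if_neg (by omega : ¬ i₀.val < q)] at this
          split_ifs at this with h
          · exact Finset.mem_singleton.mp this
          · simp at this
        have hVsub : V ⊆ Finset.univ.filter (fun i : Fin n => q ≤ i.val ∧ i.val < 2 * q - 1) := by
          intro i hi
          have := haa i hi
          rw [had] at this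
          simp only [Finset.mem_filter, Finset.mem_univ, true_and]
          simp only [hQdef] at this
          split_ifs at this with h1 h2
          · exact absurd (Finset.mem_singleton.mp this) (Ne.symm hcd)
          · omega
          · simp at this
        have hcard := Finset.card_le_card hVsub
        rw [card_filter_val_Ico q (2*q-1) h2qn] at hcard
        have : V.card * k ≤ (q - 1) * k :=
          Nat.mul_le_mul_right k (by omega)
        omega
    -- characterization of cohesive groups in Q': all ballots are {d}
    have hQ'char : ∀ V : Finset (Fin n), Cohesive Q' k 1 V →
        V.Nonempty ∧ ∀ i ∈ V, Q' i = {d} := by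
      rintro V ⟨hV1, hV2⟩
      rw [one_mul] at hV1
      have hVne : V.Nonempty := by
        rcases Finset.eq_empty_or_nonempty V with rfl | h
        · simp at hV1; omega
        · exact h
      obtain ⟨a, haa⟩ := Finset.card_pos.mp (by omega : 0 < (commonApproved Q' V).card)
      simp only [commonApproved, Finset.mem_filter, Finset.mem_univ, true_and] at haa
      by_cases hall : ∀ i ∈ V, ¬ i.val < q - 1 ∧ i.val < 2 * q - 1
      · refine ⟨hVne, fun i hi => ?_⟩
        simp only [hQ'def]
        rw [if_neg (hall i hi).1, if_pos (hall i hi).2]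
      · exfalso
        push_neg at hall
        obtain ⟨i₀, hi₀V, hi₀⟩ := hall
        have hac : a = c := by
          have h0 := haa i₀ hi₀V
          simp only [hQ'def] at h0
          split_ifs at h0 with h1 h2
          · exact Finset.mem_singleton.mp h0
          · have := hi₀ (by omega); omega
          · simp at h0
        have hVsub : V ⊆ Finset.univ.filter (fun i : Fin n => 0 ≤ i.val ∧ i.val < q - 1) := by
          intro i hi
          have := haa i hi
          rw [hac] at this
          simp only [Finset.mem_filter, Finset.mem_univ, true_and]
          simp only [hQ'def] at this
          split_ifs at this with h1 h2
          · exact ⟨Nat.zero_le _, h1⟩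
          · exact absurd (Finset.mem_singleton.mp this) hcd
          · simp at this
        have hcard := Finset.card_le_card hVsub
        rw [card_filter_val_Ico 0 (q-1) (by omega)] at hcard
        have : V.card * k ≤ (q - 1) * k :=
          Nat.mul_le_mul_right k (by omega)
        omega
    -- W₁ is JR in Q
    have hJRQ1 : JRsat Q k W₁ := by
      refine ⟨hW₁card, fun V hV => ?_⟩
      obtain ⟨⟨i, hi⟩, hball⟩ := hQchar V hV
      refine ⟨i, hi, c, ?_⟩
      rw [hball i hi]
      exact Finset.mem_inter.mpr ⟨Finset.mem_singleton_self c, hcW₁⟩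
    -- W is not JR in Q
    have hcohc : Cohesive Q k 1 (Finset.univ.filter (fun i : Fin n => 0 ≤ i.val ∧ i.val < q)) := by
      constructor
      · rw [card_filter_val_Ico 0 q hqn, one_mul, Nat.sub_zero]
        exact hqk
      · refine Finset.card_pos.mpr ⟨c, ?_⟩
        simp only [commonApproved]
        simp only [Finset.mem_filter, Finset.mem_univ, true_and]
        intro i hi
        simp only [hQdef]
        rw [if_pos hi.2]
        exact Finset.mem_singleton_self c
    have hnotQW : ¬ JRsat Q k W := by
      rintro ⟨-, h⟩
      obtain ⟨i, hiV, hne⟩ := h _ hcohc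
      simp only [Finset.mem_filter, Finset.mem_univ, true_and] at hiV
      rw [show Q i = {c} from by simp only [hQdef]; rw [if_pos hiV.2]] at hne
      rw [Finset.singleton_inter_of_notMem hc] at hne
      exact Finset.not_nonempty_empty hne
    -- W is JR in Q'
    have hJRQ'W : JRsat Q' k W := by
      refine ⟨hW, fun V hV => ?_⟩
      obtain ⟨⟨i, hi⟩, hball⟩ := hQ'char V hV
      refine ⟨i, hi, d, ?_⟩
      rw [hball i hi]
      exact Finset.mem_inter.mpr ⟨Finset.mem_singleton_self d, hd⟩
    -- W₁ is not JR in Q'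
    have hcohd : Cohesive Q' k 1
        (Finset.univ.filter (fun i : Fin n => q - 1 ≤ i.val ∧ i.val < 2 * q - 1)) := by
      constructor
      · rw [card_filter_val_Ico (q-1) (2*q-1) h2qn, one_mul]
        have heq : 2 * q - 1 - (q - 1) = q := by omega
        rw [heq]
        exact hqk
      · refine Finset.card_pos.mpr ⟨d, ?_⟩
        simp only [commonApproved]
        simp only [Finset.mem_filter, Finset.mem_univ, true_and]
        intro i hi
        simp only [hQ'def]
        rw [if_neg (by omega : ¬ i.val < q - 1), if_pos hi.2]
        exact Finset.mem_singleton_self d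
    have hnotQ'W₁ : ¬ JRsat Q' k W₁ := by
      rintro ⟨-, h⟩
      obtain ⟨i, hiV, hne⟩ := h _ hcohd
      simp only [Finset.mem_filter, Finset.mem_univ, true_and] at hiV
      rw [show Q' i = {d} from by
        simp only [hQ'def]; rw [if_neg (by omega : ¬ i.val < q - 1), if_pos hiV.2]] at hne
      rw [Finset.singleton_inter_of_notMem hdW₁] at hne
      exact Finset.not_nonempty_empty hne
    -- the probability chase
    have h1 : θ * f.prob Q k W ≤ f.prob Q k W₁ := hJR Q k W₁ W hJRQ1 hW hnotQW
    have h2 : θ * f.prob Q' k W₁ ≤ f.prob Q' k W := hJR Q' k W W₁ hJRQ'W hW₁card hnotQ'W₁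
    have h3 : f.prob Q k W₁ ≤ Real.exp ε * f.prob Q' k W₁ := hDP k Q Q' W₁ hnb
    have h4 : f.prob Q' k W ≤ Real.exp ε * f.prob Q k W := hDP k Q' Q W hnb'
    have hex : 0 < Real.exp ε := Real.exp_pos ε
    have hθ0 : 0 < θ := lt_trans hex hθ
    have hx0 : 0 ≤ f.prob Q k W := f.nonneg Q k W
    have hy0 : 0 ≤ f.prob Q k W₁ := f.nonneg Q k W₁
    have hx'0 : 0 ≤ f.prob Q' k W := f.nonneg Q' k W
    have hy'0 : 0 ≤ f.prob Q' k W₁ := f.nonneg Q' k W₁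
    have hQW0 : f.prob Q k W = 0 := by
      nlinarith [mul_le_mul_of_nonneg_left h3 (le_of_lt hθ0),
        mul_le_mul_of_nonneg_left h1 (le_of_lt hθ0),
        mul_le_mul_of_nonneg_left h2 (le_of_lt hex),
        mul_le_mul_of_nonneg_left h4 (le_of_lt hex)]
    -- propagate the zero to the all-empty profile
    apply prob_zero_chain f hDP k W n _ Q _ hQW0
    calc (Finset.univ.filter
          (fun i => (fun _ : Fin n => (∅ : Finset A)) i ≠ Q i)).card
        ≤ Finset.univ.card := Finset.card_filter_le _ _
      _ = n := by simp
  -- contradiction with sum_one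
  have hsum := f.sum_one (fun _ : Fin n => (∅ : Finset A)) k (by omega)
  rw [Finset.sum_eq_zero (fun W hW => key W (Finset.mem_filter.mp hW).2)] at hsum
  exact one_ne_zero hsum.symm
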